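/- For all m, m₁, m₂ ∈ SL(2,ℝ): (i) m⁻¹·γᵢ·m = Σⱼ O(m)ᵢⱼ·γⱼ for i = 1,2,3, i.e. conjugation by m preserves the real span of γ₁, γ₂, γ₃ with coefficient matrix O(m); (ii) O(m)·η·O(m)ᵀ = η, so O(m) lies in the orthogonal group of the nondegenerate symmetric bilinear form η of signature (2,1); (iii) O(m₁·m₂) = O(m₁)·O(m₂), i.e. O is a group homomorphism from SL(2,ℝ) to the η-orthogonal group O(1,2). -/

import Mathlib

open Matrix

/-- The three gamma matrices `γ₁ = [[0,0],[1,0]]`, `γ₂ = (1/√2)·[[−1,0],[0,1]]`,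
`γ₃ = [[0,1],[0,0]]`. -/
noncomputable def gammaMat : Fin 3 → Matrix (Fin 2) (Fin 2) ℝ :=
  ![!![0, 0; 1, 0],
    (Real.sqrt 2)⁻¹ • !![-1, 0; 0, 1],
    !![0, 1; 0, 0]]

/-- The symmetric bilinear form `η = [[0,0,1],[0,1,0],[1,0,0]]` of signature `(2,1)`. -/
def etaMat : Matrix (Fin 3) (Fin 3) ℝ := !![0, 0, 1; 0, 1, 0; 1, 0, 0]

/-- The vector (adjoint) image `O(m)ᵢⱼ = Σₖ Tr(m⁻¹·γᵢ·m·γₖ)·ηₖⱼ` of `m ∈ SL(2,ℝ)`. -/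
noncomputable def Omat (m : Matrix (Fin 2) (Fin 2) ℝ) : Matrix (Fin 3) (Fin 3) ℝ :=
  Matrix.of fun i j => ∑ k : Fin 3, (m⁻¹ * gammaMat i * m * gammaMat k).trace * etaMat k j

lemma ht' : (Real.sqrt 2)⁻¹ * (Real.sqrt 2)⁻¹ = 1/2 := by
  rw [← mul_inv, Real.mul_self_sqrt (by norm_num)]; norm_num

lemma trace_gamma_gamma (i j : Fin 3) : (gammaMat i * gammaMat j).trace = etaMat i j := by
  have ht := ht'
  fin_cases i <;> fin_cases j <;>
    simp [gammaMat, etaMat, Matrix.trace_fin_two, Matrix.mul_apply, Fin.sum_univ_two,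
      Matrix.vecHead, Matrix.vecTail] <;>
    first
      | ring1
      | linear_combination 2 * ht

lemma span_lemma (X : Matrix (Fin 2) (Fin 2) ℝ) (hX : X.trace = 0) :
    X = ∑ j : Fin 3, (∑ k : Fin 3, (X * gammaMat k).trace * etaMat k j) • gammaMat j := by
  have ht := ht'
  obtain ⟨a, b, c, d, rfl⟩ : ∃ a b c d, X = !![a, b; c, d] :=
    ⟨_, _, _, _, Matrix.eta_fin_two X⟩
  rw [Matrix.trace_fin_two] at hX
  norm_num at hX
  ext i j
  fin_cases i <;> fin_cases j <;>
    simp [gammaMat, etaMat, Matrix.trace_fin_two, Matrix.mul_apply, Fin.sum_univ_two,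
      Fin.sum_univ_three, Matrix.vecHead, Matrix.vecTail] <;>
    first
      | ring1
      | linear_combination (d - a) * ht + (1/2) * hX
      | linear_combination (a - d) * ht + (1/2) * hX
      | linear_combination hX
      | linear_combination -hX

lemma trace_gamma (i : Fin 3) : (gammaMat i).trace = 0 := by
  fin_cases i <;> simp [gammaMat, Matrix.trace_fin_two, Matrix.vecHead, Matrix.vecTail]

lemma conj_trace (m : Matrix (Fin 2) (Fin 2) ℝ) (hm : m.det = 1)
    (A : Matrix (Fin 2) (Fin 2) ℝ) : (m⁻¹ * A * m).trace = A.trace := by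
  have hu : IsUnit m.det := by rw [hm]; exact isUnit_one
  rw [Matrix.trace_mul_cycle, Matrix.mul_nonsing_inv m hu, Matrix.one_mul]

lemma key_lemma (m : Matrix (Fin 2) (Fin 2) ℝ) (hm : m.det = 1) (i : Fin 3) :
    m⁻¹ * gammaMat i * m = ∑ j : Fin 3, Omat m i j • gammaMat j := by
  have h0 : (m⁻¹ * gammaMat i * m).trace = 0 := by rw [conj_trace m hm, trace_gamma]
  simpa only [Omat, Matrix.of_apply] using span_lemma (m⁻¹ * gammaMat i * m) h0

lemma trace_sum_sum (a b : Fin 3 → ℝ) :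
    ((∑ k : Fin 3, a k • gammaMat k) * (∑ l : Fin 3, b l • gammaMat l)).trace
      = ∑ k : Fin 3, ∑ l : Fin 3, a k * b l * etaMat k l := by
  rw [Finset.sum_mul, Matrix.trace_sum]
  refine Finset.sum_congr rfl fun k _ => ?_
  rw [smul_mul_assoc, Finset.mul_sum, Matrix.trace_smul, Matrix.trace_sum]
  simp [mul_smul_comm, Matrix.trace_smul, trace_gamma_gamma, smul_eq_mul, mul_assoc, Finset.smul_sum, Finset.mul_sum]

lemma coeff_eq (a : Fin 3 → ℝ) (j : Fin 3) :
    ∑ k : Fin 3, ((∑ l : Fin 3, a l • gammaMat l) * gammaMat k).trace * etaMat k j = a j := by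
  have h1 : ∀ k, ((∑ l : Fin 3, a l • gammaMat l) * gammaMat k).trace
      = ∑ l : Fin 3, a l * etaMat l k := by
    intro k
    rw [Finset.sum_mul, Matrix.trace_sum]
    refine Finset.sum_congr rfl fun l _ => ?_
    rw [smul_mul_assoc, Matrix.trace_smul, trace_gamma_gamma, smul_eq_mul]
  simp only [h1]
  fin_cases j <;> norm_num [etaMat, Fin.sum_univ_three, Matrix.vecHead, Matrix.vecTail, Fin.isValue, Matrix.cons_val, Matrix.cons_val_zero, Matrix.cons_val_one, Matrix.cons_val_two, show (⟨2,by norm_num⟩ : Fin 3) = 2 from rfl]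

theorem stmt_2 (m m₁ m₂ : Matrix (Fin 2) (Fin 2) ℝ)
    (hm : m.det = 1) (hm₁ : m₁.det = 1) (hm₂ : m₂.det = 1) :
    (∀ i : Fin 3, m⁻¹ * gammaMat i * m = ∑ j : Fin 3, Omat m i j • gammaMat j) ∧
    Omat m * etaMat * (Omat m)ᵀ = etaMat ∧
    Omat (m₁ * m₂) = Omat m₁ * Omat m₂ := by
  have hu : IsUnit m.det := by rw [hm]; exact isUnit_one
  refine ⟨key_lemma m hm, ?_, ?_⟩
  · ext i j
    have step1 : (Omat m * etaMat * (Omat m)ᵀ) i j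
        = ∑ l : Fin 3, (∑ k : Fin 3, Omat m i k * etaMat k l) * Omat m j l := by
      rw [Matrix.mul_apply]
      exact Finset.sum_congr rfl fun l _ => by rw [Matrix.mul_apply, Matrix.transpose_apply]
    have step2 : ∑ l : Fin 3, (∑ k : Fin 3, Omat m i k * etaMat k l) * Omat m j l
        = ∑ k : Fin 3, ∑ l : Fin 3, Omat m i k * Omat m j l * etaMat k l := by
      simp only [Finset.sum_mul]
      rw [Finset.sum_comm]
      exact Finset.sum_congr rfl fun k _ => Finset.sum_congr rfl fun l _ => by ring
    have step3 : (m⁻¹ * gammaMat i * m) * (m⁻¹ * gammaMat j * m)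
        = m⁻¹ * (gammaMat i * gammaMat j) * m := by
      simp only [Matrix.mul_assoc, fun B => Matrix.mul_nonsing_inv_cancel_left m B hu]
    rw [step1, step2, ← trace_sum_sum, ← key_lemma m hm i, ← key_lemma m hm j, step3,
      conj_trace m hm, trace_gamma_gamma]
  · ext i j
    have hconj : (m₁ * m₂)⁻¹ * gammaMat i * (m₁ * m₂)
        = ∑ l : Fin 3, (Omat m₁ * Omat m₂) i l • gammaMat l := by
      rw [Matrix.mul_inv_rev]
      calc m₂⁻¹ * m₁⁻¹ * gammaMat i * (m₁ * m₂)
          = m₂⁻¹ * (m₁⁻¹ * gammaMat i * m₁) * m₂ := by simp only [Matrix.mul_assoc]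
        _ = m₂⁻¹ * (∑ l : Fin 3, Omat m₁ i l • gammaMat l) * m₂ := by
            rw [key_lemma m₁ hm₁ i]
        _ = ∑ l : Fin 3, Omat m₁ i l • (m₂⁻¹ * gammaMat l * m₂) := by
            rw [Finset.mul_sum, Finset.sum_mul]
            exact Finset.sum_congr rfl fun l _ => by rw [mul_smul_comm, smul_mul_assoc]
        _ = ∑ l : Fin 3, Omat m₁ i l • (∑ p : Fin 3, Omat m₂ l p • gammaMat p) := by
            simp only [key_lemma m₂ hm₂]
        _ = ∑ p : Fin 3, (Omat m₁ * Omat m₂) i p • gammaMat p := by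
            simp only [Finset.smul_sum, smul_smul]
            rw [Finset.sum_comm]
            refine Finset.sum_congr rfl fun p _ => ?_
            rw [← Finset.sum_smul, Matrix.mul_apply]
    show (∑ k : Fin 3, ((m₁ * m₂)⁻¹ * gammaMat i * (m₁ * m₂) * gammaMat k).trace * etaMat k j)
        = (Omat m₁ * Omat m₂) i j
    simp only [hconj]
    exact coeff_eq _ j
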